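/- There exist a constant c > 0 and N such that for all n ≥ N, the noisy voter model on the n-star with voting rates q(x, center) = c for each leaf x and q(center, x) = c/n for each leaf x satisfies max_{η ∈ {0,1}^S} ‖μ^η_{(log n)/3} − μ_∞‖_TV ≤ 1/4; that is, its mixing time is at most (log n)/3, which is strictly smaller than (1/2)·log n. (This shows that the cutoff lower bound of the main theorem can fail when the stationary distributions of the voting chains are far from uniform, even with bounded rates.) -/

import Mathlib

open scoped BigOperators

/-- The generator of a spin system on `{0,1}^V` given flip rates `r η x`. -/
noncomputable def genOfRate {V : Type} [Fintype V] [DecidableEq V]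
    (r : (V → Bool) → V → ℝ) : Matrix (V → Bool) (V → Bool) ℝ :=
  fun η ξ =>
    (∑ x, if ξ = Function.update η x (!η x) then r η x else 0)
      - (if ξ = η then ∑ x, r η x else 0)

/-- Flip rate of the noisy voter model with voting rates `q`. -/
noncomputable def voterRate {V : Type} [Fintype V] [DecidableEq V]
    (q : V → V → ℝ) (η : V → Bool) (x : V) : ℝ :=
  1 / 2 + ∑ y ∈ Finset.univ.filter (fun y => y ≠ x), q x y * (if η y ≠ η x then 1 else 0)

/-- Generator of the noisy voter model. -/
noncomputable def voterGen {V : Type} [Fintype V] [DecidableEq V]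
    (q : V → V → ℝ) : Matrix (V → Bool) (V → Bool) ℝ :=
  genOfRate (voterRate q)

/-- Transition semigroup `P^t = exp (t Q)` of the noisy voter model. -/
noncomputable def voterP {V : Type} [Fintype V] [DecidableEq V]
    (q : V → V → ℝ) (t : ℝ) : Matrix (V → Bool) (V → Bool) ℝ :=
  NormedSpace.exp (t • voterGen q)

/-- Total variation distance between two vectors on a finite set. -/
noncomputable def tvDist {Ω : Type} [Fintype Ω] (m1 m2 : Ω → ℝ) : ℝ :=
  (1 / 2) * ∑ s, |m1 s - m2 s|

/-- `π` is a stationary distribution for the continuous-time Markov chain `(S, q)`. -/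
def IsStationaryChain {V : Type} [Fintype V] [DecidableEq V]
    (q : V → V → ℝ) (π : V → ℝ) : Prop :=
  (∀ x, 0 ≤ π x) ∧ (∑ x, π x = 1) ∧
    ∀ y, ∑ x ∈ Finset.univ.filter (fun x => x ≠ y), π x * q x y
        = π y * ∑ z ∈ Finset.univ.filter (fun z => z ≠ y), q y z

/-- `μ` is a stationary distribution for the noisy voter model with rates `q`. -/
def IsStationaryNVM {V : Type} [Fintype V] [DecidableEq V]
    (q : V → V → ℝ) (μ : (V → Bool) → ℝ) : Prop :=
  (∀ η, 0 ≤ μ η) ∧ (∑ η, μ η = 1) ∧ ∀ ξ, ∑ η, μ η * voterGen q η ξ = 0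

/-- Voting rates of continuous-time random walk with parameter 1 on the `n`-star:
`none` is the center vertex and `some i` (for `i : Fin n`) are the leaves. A leaf jumps to the
center at rate 1, and the center jumps to a uniformly chosen leaf at rate 1. -/
noncomputable def starQ (n : ℕ) : Option (Fin n) → Option (Fin n) → ℝ :=
  fun x y => match x, y with
    | some _, none => 1
    | none, some _ => 1 / (n : ℝ)
    | _, _ => 0

set_option linter.unusedSectionVars false
open Matrix Finset

namespace NVMaux

variable {Ω : Type} [Fintype Ω] [DecidableEq Ω]

/-- Apply a linear functional to the matrix exponential, term by term. -/
lemma map_exp_tsum (L : Matrix Ω Ω ℝ →ₗ[ℝ] ℝ) (A : Matrix Ω Ω ℝ) :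
    L (NormedSpace.exp A) = ∑' m : ℕ, ((m.factorial : ℝ)⁻¹) * L (A ^ m) := by
  letI : SeminormedRing (Matrix Ω Ω ℝ) := Matrix.linftyOpSemiNormedRing
  letI : NormedRing (Matrix Ω Ω ℝ) := Matrix.linftyOpNormedRing
  letI : NormedAlgebra ℝ (Matrix Ω Ω ℝ) := Matrix.linftyOpNormedAlgebra
  have hsum : Summable (fun m : ℕ => ((m.factorial : ℝ)⁻¹) • A ^ m) :=
    NormedSpace.expSeries_summable' (𝕂 := ℝ) A
  rw [NormedSpace.exp_eq_tsum ℝ]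
  have h := (LinearMap.toContinuousLinearMap L).map_tsum hsum
  simpa [smul_eq_mul] using h

/-- The linear functional `M ↦ (M *ᵥ v) ω`. -/
noncomputable def mvL (v : Ω → ℝ) (ω : Ω) : Matrix Ω Ω ℝ →ₗ[ℝ] ℝ where
  toFun M := (M *ᵥ v) ω
  map_add' M N := by simp [Matrix.add_mulVec]
  map_smul' r M := by simp [Matrix.smul_mulVec]

/-- The linear functional `M ↦ (u ᵥ* M) ξ`. -/
noncomputable def vmL (u : Ω → ℝ) (ξ : Ω) : Matrix Ω Ω ℝ →ₗ[ℝ] ℝ where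
  toFun M := (u ᵥ* M) ξ
  map_add' M N := by simp [Matrix.vecMul_add]
  map_smul' r M := by
    simp only [RingHom.id_apply, smul_eq_mul]
    show (u ᵥ* (r • M)) ξ = r * (u ᵥ* M) ξ
    simp only [Matrix.vecMul, dotProduct, Matrix.smul_apply, smul_eq_mul,
      Finset.mul_sum]
    exact Finset.sum_congr rfl fun i _ => by ring

/-- If `u ᵥ* A = 0` then `u` is invariant for `exp A`. -/
lemma vecMul_exp_of_vecMul_eq_zero {A : Matrix Ω Ω ℝ} {u : Ω → ℝ}
    (h : u ᵥ* A = 0) : u ᵥ* (NormedSpace.exp A) = u := by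
  funext ξ
  have key : ∀ m : ℕ, m ≠ 0 → u ᵥ* (A ^ m) = 0 := by
    intro m hm
    induction m with
    | zero => exact absurd rfl hm
    | succ k ih =>
      rcases Nat.eq_zero_or_pos k with hk | hk
      · subst hk; simpa using h
      · rw [pow_succ, ← Matrix.vecMul_vecMul, ih (Nat.pos_iff_ne_zero.mp hk), Matrix.zero_vecMul]
  have h1 : (u ᵥ* NormedSpace.exp A) ξ = vmL u ξ (NormedSpace.exp A) := rfl
  rw [h1, map_exp_tsum]
  rw [tsum_eq_single 0 (by
    intro m hm
    have : vmL u ξ (A ^ m) = 0 := by simp [vmL, key m hm]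
    simp [this])]
  simp [vmL]

/-- If `A *ᵥ v = 0` then `v` is invariant for `exp A`. -/
lemma exp_mulVec_of_mulVec_eq_zero {A : Matrix Ω Ω ℝ} {v : Ω → ℝ}
    (h : A *ᵥ v = 0) : (NormedSpace.exp A) *ᵥ v = v := by
  funext ω
  have key : ∀ m : ℕ, m ≠ 0 → (A ^ m) *ᵥ v = 0 := by
    intro m hm
    induction m with
    | zero => exact absurd rfl hm
    | succ k ih =>
      rcases Nat.eq_zero_or_pos k with hk | hk
      · subst hk; simpa using h
      · rw [pow_succ, ← Matrix.mulVec_mulVec, h, Matrix.mulVec_zero]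
  have h1 : ((NormedSpace.exp A) *ᵥ v) ω = mvL v ω (NormedSpace.exp A) := rfl
  rw [h1, map_exp_tsum]
  rw [tsum_eq_single 0 (by
    intro m hm
    have : mvL v ω (A ^ m) = 0 := by simp [mvL, key m hm]
    simp [this])]
  simp [mvL]

variable {Ω' : Type} [Fintype Ω'] [DecidableEq Ω']

/-- The linear functional `M ↦ (M * E) p ξ` (fixed `E`). -/
noncomputable def mrL (E : Matrix Ω' Ω ℝ) (p : Ω') (ξ : Ω) : Matrix Ω' Ω' ℝ →ₗ[ℝ] ℝ where
  toFun M := (M * E) p ξ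
  map_add' M N := by simp [Matrix.add_mul]
  map_smul' r M := by simp [Matrix.smul_mul]

/-- The linear functional `M ↦ (E * M) p ξ` (fixed `E`). -/
noncomputable def mlL (E : Matrix Ω' Ω ℝ) (p : Ω') (ξ : Ω) : Matrix Ω Ω ℝ →ₗ[ℝ] ℝ where
  toFun M := (E * M) p ξ
  map_add' M N := by simp [Matrix.mul_add]
  map_smul' r M := by simp [Matrix.mul_smul]

/-- Intertwining relation passes to the exponential. -/
lemma exp_intertwine {Ahat : Matrix Ω' Ω' ℝ} {A : Matrix Ω Ω ℝ} {E : Matrix Ω' Ω ℝ}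
    (h : Ahat * E = E * A) :
    (NormedSpace.exp Ahat) * E = E * (NormedSpace.exp A) := by
  have key : ∀ m : ℕ, (Ahat ^ m) * E = E * (A ^ m) := by
    intro m
    induction m with
    | zero => simp
    | succ k ih => rw [pow_succ, pow_succ, Matrix.mul_assoc, h, ← Matrix.mul_assoc, ih,
        Matrix.mul_assoc]
  ext p ξ
  have h1 : ((NormedSpace.exp Ahat) * E) p ξ = mrL E p ξ (NormedSpace.exp Ahat) := rfl
  have h2 : (E * (NormedSpace.exp A)) p ξ = mlL E p ξ (NormedSpace.exp A) := rfl
  rw [h1, h2, map_exp_tsum, map_exp_tsum]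
  congr 1
  funext m
  have : mrL E p ξ (Ahat ^ m) = mlL E p ξ (A ^ m) := by
    simp only [mrL, mlL, LinearMap.coe_mk, AddHom.coe_mk]
    rw [key m]
  rw [this]

/-- The linear functional `M ↦ M p q`. -/
noncomputable def enL (p q : Ω) : Matrix Ω Ω ℝ →ₗ[ℝ] ℝ where
  toFun M := M p q
  map_add' M N := by simp
  map_smul' r M := by simp

/-- Entrywise nonnegativity of `exp` of an entrywise nonneg matrix. -/
lemma exp_entry_nonneg_of_nonneg {B : Matrix Ω Ω ℝ} (hB : ∀ p q, 0 ≤ B p q) (p q : Ω) :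
    0 ≤ (NormedSpace.exp B) p q := by
  have hpow : ∀ m : ℕ, ∀ p q, 0 ≤ (B ^ m) p q := by
    intro m
    induction m with
    | zero => intro p q; by_cases h : p = q <;> simp [Matrix.one_apply, h, pow_zero]
    | succ k ih =>
      intro p q
      rw [pow_succ, Matrix.mul_apply]
      exact Finset.sum_nonneg fun j _ => mul_nonneg (ih p j) (hB j q)
  have h1 : (NormedSpace.exp B) p q = enL p q (NormedSpace.exp B) := rfl
  rw [h1, map_exp_tsum]
  apply tsum_nonneg
  intro m
  have : enL p q (B ^ m) = (B ^ m) p q := rfl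
  rw [this]
  have := hpow m p q
  positivity


/-- `exp (c • 1) = Real.exp c • 1` for matrices. -/
lemma exp_smul_one (cc : ℝ) :
    NormedSpace.exp (cc • (1 : Matrix Ω Ω ℝ)) = Real.exp cc • (1 : Matrix Ω Ω ℝ) := by
  letI : SeminormedRing (Matrix Ω Ω ℝ) := Matrix.linftyOpSemiNormedRing
  letI : NormedRing (Matrix Ω Ω ℝ) := Matrix.linftyOpNormedRing
  letI : NormedAlgebra ℝ (Matrix Ω Ω ℝ) := Matrix.linftyOpNormedAlgebra
  have h1 : cc • (1 : Matrix Ω Ω ℝ) = algebraMap ℝ (Matrix Ω Ω ℝ) cc := by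
    simp [Algebra.algebraMap_eq_smul_one]
  rw [h1]
  have h2 := (NormedSpace.algebraMap_exp_comm (𝔸 := Matrix Ω Ω ℝ) cc).symm
  rw [← Real.exp_eq_exp_ℝ] at h2
  rw [← Algebra.algebraMap_eq_smul_one]
  exact h2

/-- Entrywise nonnegativity of `exp (t • A)` for a generator-type matrix `A`
(nonnegative off-diagonal entries) and `t ≥ 0`. -/
lemma exp_gen_nonneg {A : Matrix Ω Ω ℝ} (hA : ∀ p q, p ≠ q → 0 ≤ A p q)
    {t : ℝ} (ht : 0 ≤ t) (p q : Ω) : 0 ≤ (NormedSpace.exp (t • A)) p q := by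
  classical
  set r : ℝ := ∑ j : Ω, |A j j| with hr
  have hrj : ∀ j : Ω, 0 ≤ A j j + r := by
    intro j
    have h1 : |A j j| ≤ r := by
      apply Finset.single_le_sum (f := fun j : Ω => |A j j|) (fun i _ => abs_nonneg _)
        (Finset.mem_univ j)
    have := neg_abs_le (A j j)
    linarith
  set B : Matrix Ω Ω ℝ := A + r • (1 : Matrix Ω Ω ℝ) with hB
  have hBpos : ∀ a b, 0 ≤ B a b := by
    intro a b
    by_cases hab : a = b
    · subst hab
      simp only [hB, Matrix.add_apply, Matrix.smul_apply, Matrix.one_apply_eq, smul_eq_mul,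
        mul_one]
      exact hrj a
    · simp only [hB, Matrix.add_apply, Matrix.smul_apply, Matrix.one_apply_ne hab, smul_eq_mul,
        mul_zero, add_zero]
      exact hA a b hab
  have hsplit : t • A = t • B + (-(t * r)) • (1 : Matrix Ω Ω ℝ) := by
    rw [hB]
    rw [smul_add, smul_smul]
    rw [add_assoc, ← add_smul]
    simp
  have hcomm : Commute (t • B) ((-(t * r)) • (1 : Matrix Ω Ω ℝ)) :=
    ((Commute.one_right (t • B)).smul_right _)
  rw [hsplit, Matrix.exp_add_of_commute _ _ hcomm, exp_smul_one]
  rw [Matrix.mul_smul, Matrix.mul_one]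
  simp only [Matrix.smul_apply, smul_eq_mul]
  apply mul_nonneg (Real.exp_nonneg _)
  have htB : ∀ a b, 0 ≤ (t • B) a b := by
    intro a b
    simp only [Matrix.smul_apply, smul_eq_mul]
    exact mul_nonneg ht (hBpos a b)
  exact exp_entry_nonneg_of_nonneg htB p q

/-- Monotonicity of multiplication by an entrywise-nonneg matrix. -/
lemma mulVec_mono {M : Matrix Ω Ω ℝ} (hM : ∀ p q, 0 ≤ M p q) {v w : Ω → ℝ}
    (hvw : ∀ q, v q ≤ w q) (p : Ω) : (M *ᵥ v) p ≤ (M *ᵥ w) p := by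
  simp only [Matrix.mulVec, dotProduct]
  exact Finset.sum_le_sum fun q _ => mul_le_mul_of_nonneg_left (hvw q) (hM p q)

/-- Grönwall-type bound: if `A *ᵥ v ≤ -lam • v` pointwise, then
`exp (t • A) *ᵥ v ≤ exp (-lam * t) • v` pointwise, for `t ≥ 0`. -/
lemma exp_gronwall {A : Matrix Ω Ω ℝ} (hA : ∀ p q, p ≠ q → 0 ≤ A p q)
    {v : Ω → ℝ} {lam : ℝ} (hv : ∀ ω, (A *ᵥ v) ω ≤ -(lam * v ω))
    {t : ℝ} (ht : 0 ≤ t) (ω : Ω) :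
    ((NormedSpace.exp (t • A)) *ᵥ v) ω ≤ Real.exp (-(lam * t)) * v ω := by
  letI : SeminormedRing (Matrix Ω Ω ℝ) := Matrix.linftyOpSemiNormedRing
  letI : NormedRing (Matrix Ω Ω ℝ) := Matrix.linftyOpNormedRing
  letI : NormedAlgebra ℝ (Matrix Ω Ω ℝ) := Matrix.linftyOpNormedAlgebra
  set g : ℝ → ℝ := fun s => Real.exp (lam * s) * ((NormedSpace.exp (s • A) *ᵥ v) ω) with hg
  have hderiv : ∀ s : ℝ, HasDerivAt g
      (lam * Real.exp (lam * s) * ((NormedSpace.exp (s • A) *ᵥ v) ω)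
        + Real.exp (lam * s) * (((NormedSpace.exp (s • A) * A) *ᵥ v) ω)) s := by
    intro s
    have h1 : HasDerivAt (fun u : ℝ => NormedSpace.exp (u • A))
        ((NormedSpace.exp (s • A)) * A) s := hasDerivAt_exp_smul_const A s
    have h2 : HasDerivAt (fun u : ℝ => (mvL v ω) (NormedSpace.exp (u • A)))
        ((mvL v ω) (NormedSpace.exp (s • A) * A)) s :=
      ((LinearMap.toContinuousLinearMap (mvL v ω)).hasFDerivAt.comp_hasDerivAt s h1)
    have h3 : HasDerivAt (fun u : ℝ => Real.exp (lam * u)) (lam * Real.exp (lam * s)) s := by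
      exact ((Real.hasDerivAt_exp (lam * s)).comp s
        ((hasDerivAt_id s).const_mul lam)).congr_deriv (by simp only [id, mul_one]; ring)
    exact h3.mul h2
  have hd0 : ∀ s : ℝ, 0 ≤ s → (lam * Real.exp (lam * s) * ((NormedSpace.exp (s • A) *ᵥ v) ω)
        + Real.exp (lam * s) * (((NormedSpace.exp (s • A) * A) *ᵥ v) ω)) ≤ 0 := by
    intro s hs
    have hpos := fun p q => exp_gen_nonneg hA hs (p := p) (q := q)
    have hstep : (((NormedSpace.exp (s • A) * A) *ᵥ v) ω)
        ≤ ((NormedSpace.exp (s • A)) *ᵥ (fun p => -(lam * v p))) ω := by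
      rw [← Matrix.mulVec_mulVec]
      exact mulVec_mono hpos (fun q => hv q) ω
    have heq : ((NormedSpace.exp (s • A)) *ᵥ (fun p => -(lam * v p))) ω
        = -(lam * ((NormedSpace.exp (s • A)) *ᵥ v) ω) := by
      simp only [Matrix.mulVec, dotProduct]
      rw [Finset.mul_sum, ← Finset.sum_neg_distrib]
      exact Finset.sum_congr rfl fun q _ => by ring
    have := mul_le_mul_of_nonneg_left (hstep.trans_eq heq) (Real.exp_nonneg (lam * s))
    nlinarith [this]
  have hmono : g t ≤ g 0 := by
    have hanti : AntitoneOn g (Set.Icc 0 t) := by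
      apply antitoneOn_of_deriv_nonpos (convex_Icc 0 t)
      · exact fun s _ => ((hderiv s).continuousAt).continuousWithinAt
      · intro s _
        exact ((hderiv s).differentiableAt).differentiableWithinAt
      · intro s hs
        rw [interior_Icc] at hs
        rw [(hderiv s).deriv]
        exact hd0 s hs.1.le
    exact hanti (Set.left_mem_Icc.mpr ht) (Set.right_mem_Icc.mpr ht) ht
  have hg0 : g 0 = v ω := by
    simp only [hg, mul_zero, Real.exp_zero, one_mul, zero_smul]
    rw [NormedSpace.exp_zero, Matrix.one_mulVec]
  have hgt : g t = Real.exp (lam * t) * ((NormedSpace.exp (t • A) *ᵥ v) ω) := rfl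
  have h2 : Real.exp (lam * t) * ((NormedSpace.exp (t • A) *ᵥ v) ω) ≤ v ω := by
    rw [← hgt, ← hg0]; exact hmono
  have h3 := mul_le_mul_of_nonneg_left h2 (Real.exp_nonneg (-(lam * t)))
  rw [← mul_assoc, ← Real.exp_add, neg_add_cancel, Real.exp_zero, one_mul] at h3
  exact h3

end NVMaux

namespace NVMstar

variable (n : ℕ)

abbrev Cfg := Option (Fin n) → Bool
abbrev Pr := Cfg n × Cfg n

/-- concrete rates, `c = 15` -/
noncomputable def qq : Option (Fin n) → Option (Fin n) → ℝ :=
  fun x y => 15 * starQ n x y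

/-- synchronous update of the pair configuration at site `x`. -/
def upd (ω : Pr n) (x : Option (Fin n)) (p : Bool × Bool) : Pr n :=
  (Function.update ω.1 x p.1, Function.update ω.2 x p.2)

/-- The coupled (synchronous) generator on pairs of configurations. -/
noncomputable def Qhat : Matrix (Pr n) (Pr n) ℝ := fun ω ω' =>
  ((∑ x, (1/2 : ℝ) * (if ω' = upd n ω x (false, false) then 1 else 0))
   + (∑ x, (1/2 : ℝ) * (if ω' = upd n ω x (true, true) then 1 else 0))
   + ∑ x, ∑ y ∈ Finset.univ.filter (fun y => y ≠ x),
       qq n x y * (if ω' = upd n ω x (ω.1 y, ω.2 y) then 1 else 0))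
  - (if ω' = ω then
      ((∑ _x : Option (Fin n), (1/2 : ℝ)) + (∑ _x : Option (Fin n), (1/2 : ℝ))
        + ∑ x, ∑ y ∈ Finset.univ.filter (fun y => y ≠ x), qq n x y) else 0)

lemma qq_nonneg : ∀ x y, 0 ≤ qq n x y := by
  intro x y
  rcases x with _ | i <;> rcases y with _ | j <;> simp [qq, starQ] <;> positivity

lemma Qhat_offdiag_nonneg : ∀ p q : Pr n, p ≠ q → 0 ≤ Qhat n p q := by
  intro p q hpq
  unfold Qhat
  rw [if_neg (fun h => hpq h.symm)]
  rw [sub_zero]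
  have ind_nonneg : ∀ (P : Prop) [Decidable P], (0:ℝ) ≤ if P then 1 else 0 := by
    intro P hP; split <;> norm_num
  apply add_nonneg
  apply add_nonneg
  · exact Finset.sum_nonneg fun x _ => mul_nonneg (by norm_num) (ind_nonneg _)
  · exact Finset.sum_nonneg fun x _ => mul_nonneg (by norm_num) (ind_nonneg _)
  · exact Finset.sum_nonneg fun x _ => Finset.sum_nonneg fun y _ =>
      mul_nonneg (qq_nonneg n x y) (ind_nonneg _)

/-- action of the coupled generator on a function. -/
lemma Qhat_mulVec (f : Pr n → ℝ) (ω : Pr n) :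
    (Qhat n *ᵥ f) ω =
      (∑ x, (1/2 : ℝ) * (f (upd n ω x (false, false)) - f ω))
      + (∑ x, (1/2 : ℝ) * (f (upd n ω x (true, true)) - f ω))
      + ∑ x, ∑ y ∈ Finset.univ.filter (fun y => y ≠ x),
          qq n x y * (f (upd n ω x (ω.1 y, ω.2 y)) - f ω) := by
  have collapse : ∀ (z : Pr n) (r : ℝ),
      (∑ ω' : Pr n, (r * (if ω' = z then (1:ℝ) else 0)) * f ω') = r * f z := by
    intro z r
    rw [Finset.sum_eq_single z]
    · simp
    · intro b _ hb; simp [hb]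
    · intro h; exact absurd (Finset.mem_univ z) h
  unfold Matrix.mulVec dotProduct Qhat
  simp only [sub_mul, add_mul, Finset.sum_sub_distrib, Finset.sum_add_distrib]
  have h1 : (∑ ω' : Pr n, (∑ x, (1/2 : ℝ) * (if ω' = upd n ω x (false, false) then 1 else 0)) * f ω')
      = ∑ x, (1/2 : ℝ) * f (upd n ω x (false, false)) := by
    calc (∑ ω' : Pr n, (∑ x, (1/2 : ℝ) * (if ω' = upd n ω x (false, false) then 1 else 0)) * f ω')
        = ∑ ω' : Pr n, ∑ x, ((1/2 : ℝ) * (if ω' = upd n ω x (false, false) then 1 else 0)) * f ω' := by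
          simp only [Finset.sum_mul]
      _ = ∑ x, ∑ ω' : Pr n, ((1/2 : ℝ) * (if ω' = upd n ω x (false, false) then 1 else 0)) * f ω' :=
          Finset.sum_comm
      _ = ∑ x, (1/2 : ℝ) * f (upd n ω x (false, false)) :=
          Finset.sum_congr rfl fun x _ => collapse _ _
  have h2 : (∑ ω' : Pr n, (∑ x, (1/2 : ℝ) * (if ω' = upd n ω x (true, true) then 1 else 0)) * f ω')
      = ∑ x, (1/2 : ℝ) * f (upd n ω x (true, true)) := by
    calc (∑ ω' : Pr n, (∑ x, (1/2 : ℝ) * (if ω' = upd n ω x (true, true) then 1 else 0)) * f ω')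
        = ∑ ω' : Pr n, ∑ x, ((1/2 : ℝ) * (if ω' = upd n ω x (true, true) then 1 else 0)) * f ω' := by
          simp only [Finset.sum_mul]
      _ = ∑ x, ∑ ω' : Pr n, ((1/2 : ℝ) * (if ω' = upd n ω x (true, true) then 1 else 0)) * f ω' :=
          Finset.sum_comm
      _ = ∑ x, (1/2 : ℝ) * f (upd n ω x (true, true)) :=
          Finset.sum_congr rfl fun x _ => collapse _ _
  have h3 : (∑ ω' : Pr n, (∑ x, ∑ y ∈ Finset.univ.filter (fun y => y ≠ x),
        qq n x y * (if ω' = upd n ω x (ω.1 y, ω.2 y) then 1 else 0)) * f ω')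
      = ∑ x, ∑ y ∈ Finset.univ.filter (fun y => y ≠ x), qq n x y * f (upd n ω x (ω.1 y, ω.2 y)) := by
    calc (∑ ω' : Pr n, (∑ x, ∑ y ∈ Finset.univ.filter (fun y => y ≠ x),
        qq n x y * (if ω' = upd n ω x (ω.1 y, ω.2 y) then 1 else 0)) * f ω')
        = ∑ ω' : Pr n, ∑ x, ∑ y ∈ Finset.univ.filter (fun y => y ≠ x),
            (qq n x y * (if ω' = upd n ω x (ω.1 y, ω.2 y) then 1 else 0)) * f ω' := by
          simp only [Finset.sum_mul]
      _ = ∑ x, ∑ ω' : Pr n, ∑ y ∈ Finset.univ.filter (fun y => y ≠ x),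
            (qq n x y * (if ω' = upd n ω x (ω.1 y, ω.2 y) then 1 else 0)) * f ω' :=
          Finset.sum_comm
      _ = ∑ x, ∑ y ∈ Finset.univ.filter (fun y => y ≠ x), ∑ ω' : Pr n,
            (qq n x y * (if ω' = upd n ω x (ω.1 y, ω.2 y) then 1 else 0)) * f ω' :=
          Finset.sum_congr rfl fun x _ => Finset.sum_comm
      _ = ∑ x, ∑ y ∈ Finset.univ.filter (fun y => y ≠ x), qq n x y * f (upd n ω x (ω.1 y, ω.2 y)) :=
          Finset.sum_congr rfl fun x _ => Finset.sum_congr rfl fun y _ => collapse _ _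
  have h4 : (∑ ω' : Pr n, (if ω' = ω then
      ((∑ _x : Option (Fin n), (1/2 : ℝ)) + (∑ _x : Option (Fin n), (1/2 : ℝ))
        + ∑ x, ∑ y ∈ Finset.univ.filter (fun y => y ≠ x), qq n x y) else 0) * f ω')
      = ((∑ _x : Option (Fin n), (1/2 : ℝ)) + (∑ _x : Option (Fin n), (1/2 : ℝ))
        + ∑ x, ∑ y ∈ Finset.univ.filter (fun y => y ≠ x), qq n x y) * f ω := by
    rw [Finset.sum_eq_single ω]
    · simp
    · intro b _ hb; simp [hb]
    · intro h; exact absurd (Finset.mem_univ ω) h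
  rw [h1, h2, h3, h4]
  simp only [mul_sub, Finset.sum_sub_distrib, add_mul, Finset.sum_mul]
  ring

/-- first-marginal projection matrix -/
noncomputable def E1 : Matrix (Pr n) (Cfg n) ℝ := fun ω ξ => if ω.1 = ξ then 1 else 0

/-- second-marginal projection matrix -/
noncomputable def E2 : Matrix (Pr n) (Cfg n) ℝ := fun ω ξ => if ω.2 = ξ then 1 else 0

lemma site_id (η ξ : Cfg n) (x : Option (Fin n)) :
    (1/2 : ℝ) * ((if Function.update η x false = ξ then (1:ℝ) else 0) - (if η = ξ then 1 else 0))
    + (1/2) * ((if Function.update η x true = ξ then (1:ℝ) else 0) - (if η = ξ then 1 else 0))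
    + (∑ y ∈ Finset.univ.filter (fun y => y ≠ x),
        qq n x y * ((if Function.update η x (η y) = ξ then (1:ℝ) else 0) - (if η = ξ then 1 else 0)))
    = (if ξ = Function.update η x (!η x) then voterRate (qq n) η x else 0)
      - (if ξ = η then voterRate (qq n) η x else 0) := by
  have hupd_self : Function.update η x (η x) = η := Function.update_eq_self x η
  have hcopy : ∀ y, (if Function.update η x (η y) = ξ then (1:ℝ) else 0) - (if η = ξ then 1 else 0)
      = (if η y ≠ η x then (1:ℝ) else 0)
        * ((if Function.update η x (!η x) = ξ then (1:ℝ) else 0) - (if η = ξ then 1 else 0)) := by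
    intro y
    by_cases hy : η y = η x
    · rw [hy, hupd_self]; simp [hy]
    · have hval : η y = !(η x) := by
        cases hηy : η y <;> cases hηx : η x <;> simp_all
      rw [hval]; simp [hy]
  have hnoise : (1/2 : ℝ) * ((if Function.update η x false = ξ then (1:ℝ) else 0)
        - (if η = ξ then 1 else 0))
      + (1/2) * ((if Function.update η x true = ξ then (1:ℝ) else 0) - (if η = ξ then 1 else 0))
      = (1/2) * ((if Function.update η x (!η x) = ξ then (1:ℝ) else 0)
        - (if η = ξ then 1 else 0)) := by
    cases hx : η x
    · have h1 : Function.update η x false = η := by rw [← hx]; exact hupd_self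
      rw [h1]; simp only [hx, Bool.not_false]; ring
    · have h1 : Function.update η x true = η := by rw [← hx]; exact hupd_self
      rw [h1]; simp only [hx, Bool.not_true]; ring
  rw [hnoise]
  have hsum : (∑ y ∈ Finset.univ.filter (fun y => y ≠ x),
        qq n x y * ((if Function.update η x (η y) = ξ then (1:ℝ) else 0)
          - (if η = ξ then 1 else 0)))
      = (∑ y ∈ Finset.univ.filter (fun y => y ≠ x), qq n x y * (if η y ≠ η x then (1:ℝ) else 0))
        * ((if Function.update η x (!η x) = ξ then (1:ℝ) else 0)
          - (if η = ξ then 1 else 0)) := by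
    rw [Finset.sum_mul]
    exact Finset.sum_congr rfl fun y _ => by rw [hcopy y]; ring
  rw [hsum]
  have hiff : ∀ (z : Cfg n) (r : ℝ), (if ξ = z then r else 0) = r * (if z = ξ then (1:ℝ) else 0) := by
    intro z r
    by_cases h : ξ = z
    · simp [h]
    · rw [if_neg h, if_neg (fun hh => h hh.symm)]; ring
  rw [hiff, hiff]
  unfold voterRate
  ring

lemma Qhat_mul_E1 : Qhat n * E1 n = E1 n * voterGen (qq n) := by
  ext ω ξ
  rw [Matrix.mul_apply, Matrix.mul_apply]
  have hR : (∑ η' : Cfg n, E1 n ω η' * voterGen (qq n) η' ξ) = voterGen (qq n) ω.1 ξ := by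
    rw [Finset.sum_eq_single ω.1]
    · simp [E1]
    · intro b _ hb
      rw [show E1 n ω b = 0 from if_neg (fun h => hb h.symm), zero_mul]
    · intro h; exact absurd (Finset.mem_univ ω.1) h
  have hL : (∑ ω' : Pr n, Qhat n ω ω' * E1 n ω' ξ)
      = (Qhat n *ᵥ fun ω' => E1 n ω' ξ) ω := rfl
  rw [hL, hR, Qhat_mulVec]
  show _ = (genOfRate (voterRate (qq n))) ω.1 ξ
  unfold genOfRate
  have hdist : (if ξ = ω.1 then (∑ x, voterRate (qq n) ω.1 x) else 0)
      = ∑ x, (if ξ = ω.1 then voterRate (qq n) ω.1 x else 0) := by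
    split <;> simp
  rw [hdist, ← Finset.sum_sub_distrib, ← Finset.sum_add_distrib, ← Finset.sum_add_distrib]
  apply Finset.sum_congr rfl
  intro x _
  have := site_id n ω.1 ξ x
  simp only [E1, upd] at this ⊢
  convert this using 3 <;> congr!

lemma Qhat_mul_E2 : Qhat n * E2 n = E2 n * voterGen (qq n) := by
  ext ω ξ
  rw [Matrix.mul_apply, Matrix.mul_apply]
  have hR : (∑ η' : Cfg n, E2 n ω η' * voterGen (qq n) η' ξ) = voterGen (qq n) ω.2 ξ := by
    rw [Finset.sum_eq_single ω.2]
    · simp [E2]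
    · intro b _ hb
      rw [show E2 n ω b = 0 from if_neg (fun h => hb h.symm), zero_mul]
    · intro h; exact absurd (Finset.mem_univ ω.2) h
  have hL : (∑ ω' : Pr n, Qhat n ω ω' * E2 n ω' ξ)
      = (Qhat n *ᵥ fun ω' => E2 n ω' ξ) ω := rfl
  rw [hL, hR, Qhat_mulVec]
  show _ = (genOfRate (voterRate (qq n))) ω.2 ξ
  unfold genOfRate
  have hdist : (if ξ = ω.2 then (∑ x, voterRate (qq n) ω.2 x) else 0)
      = ∑ x, (if ξ = ω.2 then voterRate (qq n) ω.2 x else 0) := by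
    split <;> simp
  rw [hdist, ← Finset.sum_sub_distrib, ← Finset.sum_add_distrib, ← Finset.sum_add_distrib]
  apply Finset.sum_congr rfl
  intro x _
  have := site_id n ω.2 ξ x
  simp only [E2, upd] at this ⊢
  convert this using 3 <;> congr!

/-! ### The discrepancy observables -/

def Ds (ω : Pr n) : Finset (Fin n) :=
  Finset.univ.filter (fun i => ω.1 (some i) ≠ ω.2 (some i))

noncomputable def dd (ω : Pr n) : ℝ := if ω.1 none = ω.2 none then 0 else 1

noncomputable def Mc : ℝ := 16 * (n:ℝ) ^ ((4:ℝ)⁻¹)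

noncomputable def bet : ℝ := (1 + Mc n) / n

noncomputable def Af (ω : Pr n) : ℝ := bet n * ((n:ℝ) * dd n ω + ((Ds n ω).card : ℝ))

noncomputable def Bf (ω : Pr n) : ℝ :=
  if ω.1 none = ω.2 none then ((Ds n ω).card : ℝ) ^ ((4:ℝ)⁻¹)
  else -(Mc n * ((Ds n ω).card : ℝ) / n)

lemma Ds_upd_none (ω : Pr n) (p : Bool × Bool) : Ds n (upd n ω none p) = Ds n ω := by
  unfold Ds upd
  apply Finset.filter_congr
  intro i _
  dsimp only
  rw [Function.update_of_ne (Option.some_ne_none i), Function.update_of_ne (Option.some_ne_none i)]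

lemma cen_upd_none (ω : Pr n) (p : Bool × Bool) :
    ((upd n ω none p).1 none = (upd n ω none p).2 none) ↔ (p.1 = p.2) := by
  unfold upd
  dsimp only
  rw [Function.update_self, Function.update_self]

lemma cen_upd_leaf (ω : Pr n) (i : Fin n) (p : Bool × Bool) :
    ((upd n ω (some i) p).1 none = (upd n ω (some i) p).2 none) ↔ (ω.1 none = ω.2 none) := by
  unfold upd
  dsimp only
  rw [Function.update_of_ne (Option.some_ne_none i).symm,
    Function.update_of_ne (Option.some_ne_none i).symm]

lemma Ds_upd_leaf (ω : Pr n) (i : Fin n) (p : Bool × Bool) :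
    Ds n (upd n ω (some i) p) =
      if p.1 = p.2 then (Ds n ω).erase i else insert i (Ds n ω) := by
  unfold Ds upd
  ext j
  dsimp only
  by_cases hj : j = i
  · subst hj
    simp only [Finset.mem_filter, Finset.mem_univ, true_and, Function.update_self]
    split
    · next h => simp [h, Finset.mem_erase]
    · next h => simp [h, Finset.mem_insert]
  · have h1 : (some j : Option (Fin n)) ≠ some i := by simp [hj]
    simp only [Finset.mem_filter, Finset.mem_univ, true_and,
      Function.update_of_ne h1]
    split
    · simp [Finset.mem_erase, hj, Finset.mem_filter]
    · simp [Finset.mem_insert, hj, Finset.mem_filter]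

lemma card_erase_real (s : Finset (Fin n)) (i : Fin n) :
    (((s.erase i).card : ℝ)) = (s.card : ℝ) - (if i ∈ s then 1 else 0) := by
  by_cases h : i ∈ s
  · rw [Finset.card_erase_of_mem h, if_pos h, Nat.cast_sub (Finset.one_le_card.mpr ⟨i, h⟩)]
    norm_num
  · rw [Finset.erase_eq_of_notMem h, if_neg h, sub_zero]

lemma card_insert_real (s : Finset (Fin n)) (i : Fin n) :
    (((insert i s).card : ℝ)) = (s.card : ℝ) + (if i ∈ s then 0 else 1) := by
  by_cases h : i ∈ s
  · rw [Finset.insert_eq_self.mpr h, if_pos h, add_zero]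
  · rw [Finset.card_insert_of_notMem h, if_neg h, Nat.cast_add, Nat.cast_one]

lemma sum_ind_card (s : Finset (Fin n)) :
    (∑ i : Fin n, (if i ∈ s then (1:ℝ) else 0)) = (s.card : ℝ) := by
  rw [Finset.sum_boole]
  congr 1
  rw [Finset.filter_mem_eq_inter, Finset.univ_inter]

lemma sum_filter_ne_none (g : Option (Fin n) → ℝ) :
    ∑ y ∈ Finset.univ.filter (fun y => y ≠ none), g y = ∑ j, g (some j) := by
  rw [Finset.sum_filter, Fintype.sum_option]
  simp

lemma sum_filter_ne_some (i : Fin n) (g : Option (Fin n) → ℝ) :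
    ∑ y ∈ Finset.univ.filter (fun y => y ≠ some i), g y
      = g none + ∑ j ∈ Finset.univ.filter (fun j => j ≠ i), g (some j) := by
  rw [Finset.sum_filter, Fintype.sum_option, Finset.sum_filter]
  simp

lemma dd_upd_none_same (ω : Pr n) (b : Bool) : dd n (upd n ω none (b, b)) = 0 := by
  unfold dd
  rw [if_pos ((cen_upd_none n ω (b,b)).mpr rfl)]

lemma dd_upd_leaf (ω : Pr n) (i : Fin n) (p : Bool × Bool) :
    dd n (upd n ω (some i) p) = dd n ω := by
  unfold dd
  exact if_congr (cen_upd_leaf n ω i p) rfl rfl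

lemma dd_upd_copycenter (ω : Pr n) (j : Fin n) :
    dd n (upd n ω none (ω.1 (some j), ω.2 (some j)))
      = (if j ∈ Ds n ω then 1 else 0) := by
  unfold dd
  rw [if_congr (cen_upd_none n ω _) rfl rfl]
  by_cases h : ω.1 (some j) = ω.2 (some j)
  · rw [if_pos h, if_neg (by simp [Ds, h])]
  · rw [if_neg h, if_pos (by simp [Ds, h])]

lemma qq_leaf_leaf (i j : Fin n) : qq n (some i) (some j) = 0 := by
  simp [qq, starQ]

lemma qq_leaf_center (i : Fin n) : qq n (some i) none = 15 := by
  simp [qq, starQ]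

lemma qq_center_leaf (j : Fin n) : qq n none (some j) = 15 / n := by
  simp [qq, starQ]
  ring

/-- The star-specialized form of the action of the coupled generator. -/
lemma Qhat_mulVec_star (f : Pr n → ℝ) (ω : Pr n) :
    (Qhat n *ᵥ f) ω =
      ((1/2 : ℝ) * (f (upd n ω none (false, false)) - f ω)
        + (1/2 : ℝ) * (f (upd n ω none (true, true)) - f ω))
      + (∑ i, ((1/2 : ℝ) * (f (upd n ω (some i) (false, false)) - f ω)
          + (1/2 : ℝ) * (f (upd n ω (some i) (true, true)) - f ω)))
      + (∑ i, (15:ℝ) * (f (upd n ω (some i) (ω.1 none, ω.2 none)) - f ω))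
      + (∑ j, (15 / n : ℝ) * (f (upd n ω none (ω.1 (some j), ω.2 (some j))) - f ω)) := by
  rw [Qhat_mulVec, Fintype.sum_option, Fintype.sum_option, Fintype.sum_option]
  have hnone : ∑ y ∈ Finset.univ.filter (fun y => y ≠ (none : Option (Fin n))),
      qq n none y * (f (upd n ω none (ω.1 y, ω.2 y)) - f ω)
      = ∑ j, (15 / n : ℝ) * (f (upd n ω none (ω.1 (some j), ω.2 (some j))) - f ω) := by
    rw [sum_filter_ne_none]
    exact Finset.sum_congr rfl fun j _ => by rw [qq_center_leaf]
  have hleaf : ∀ i : Fin n, ∑ y ∈ Finset.univ.filter (fun y => y ≠ (some i : Option (Fin n))),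
      qq n (some i) y * (f (upd n ω (some i) (ω.1 y, ω.2 y)) - f ω)
      = (15:ℝ) * (f (upd n ω (some i) (ω.1 none, ω.2 none)) - f ω) := by
    intro i
    rw [sum_filter_ne_some]
    rw [qq_leaf_center]
    rw [Finset.sum_eq_zero (fun j _ => by rw [qq_leaf_leaf, zero_mul]), add_zero]
  rw [hnone]
  rw [Finset.sum_congr rfl (fun i _ => hleaf i)]
  rw [Finset.sum_add_distrib]
  ring

/-- `Af` is an exact eigenfunction of the coupled generator with eigenvalue `-1`. -/
lemma Qhat_mulVec_Af (hn : 0 < n) (ω : Pr n) : (Qhat n *ᵥ Af n) ω = -(Af n ω) := by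
  have hnR : (0:ℝ) < n := by exact_mod_cast hn
  rw [Qhat_mulVec_star]
  set k : ℝ := ((Ds n ω).card : ℝ) with hk
  set d : ℝ := dd n ω with hd
  have hAω : Af n ω = bet n * ((n:ℝ) * d + k) := rfl
  have hsum_e : (∑ i : Fin n, (if i ∈ Ds n ω then (1:ℝ) else 0)) = k := sum_ind_card n _
  have hAf_none : ∀ b : Bool, Af n (upd n ω none (b, b)) = bet n * k := by
    intro b
    unfold Af
    rw [Ds_upd_none, dd_upd_none_same]
    ring
  have hAf_leaf : ∀ (i : Fin n) (b : Bool), Af n (upd n ω (some i) (b, b))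
      = bet n * ((n:ℝ) * d + (k - (if i ∈ Ds n ω then (1:ℝ) else 0))) := by
    intro i b
    unfold Af
    rw [dd_upd_leaf, Ds_upd_leaf, if_pos rfl, card_erase_real, ← hd, ← hk]
  have hAf_cc : ∀ j : Fin n, Af n (upd n ω none (ω.1 (some j), ω.2 (some j)))
      = bet n * ((n:ℝ) * (if j ∈ Ds n ω then (1:ℝ) else 0) + k) := by
    intro j
    unfold Af
    rw [Ds_upd_none, dd_upd_copycenter, ← hk]
  have haffine : ∀ a b : ℝ, (∑ i : Fin n, (a + b * (if i ∈ Ds n ω then (1:ℝ) else 0)))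
      = (n:ℝ) * a + b * k := by
    intro a b
    rw [Finset.sum_add_distrib, Finset.sum_const, ← Finset.mul_sum, hsum_e, Finset.card_univ,
      Fintype.card_fin, nsmul_eq_mul]
  by_cases hc : ω.1 none = ω.2 none
  · have hd0 : d = 0 := by rw [hd]; unfold dd; rw [if_pos hc]
    have hAf_cl : ∀ i : Fin n, Af n (upd n ω (some i) (ω.1 none, ω.2 none))
        = bet n * ((n:ℝ) * d + (k - (if i ∈ Ds n ω then (1:ℝ) else 0))) := by
      intro i
      unfold Af
      rw [dd_upd_leaf, Ds_upd_leaf, if_pos hc, card_erase_real, ← hd, ← hk]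
    simp only [hAf_none, hAf_leaf, hAf_cl, hAf_cc, hAω]
    have h1 : (∑ i : Fin n, ((1/2 : ℝ) * (bet n * ((n:ℝ) * d + (k - (if i ∈ Ds n ω then (1:ℝ) else 0))) - bet n * ((n:ℝ) * d + k))
          + (1/2 : ℝ) * (bet n * ((n:ℝ) * d + (k - (if i ∈ Ds n ω then (1:ℝ) else 0))) - bet n * ((n:ℝ) * d + k))))
        = (n:ℝ) * 0 + (-(bet n)) * k := by
      rw [← haffine]
      exact Finset.sum_congr rfl fun i _ => by ring
    have h2 : (∑ i : Fin n, (15:ℝ) * (bet n * ((n:ℝ) * d + (k - (if i ∈ Ds n ω then (1:ℝ) else 0))) - bet n * ((n:ℝ) * d + k)))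
        = (n:ℝ) * 0 + (-(15 * bet n)) * k := by
      rw [← haffine]
      exact Finset.sum_congr rfl fun i _ => by ring
    have h3 : (∑ j : Fin n, (15 / (n:ℝ)) * (bet n * ((n:ℝ) * (if j ∈ Ds n ω then (1:ℝ) else 0) + k) - bet n * ((n:ℝ) * d + k)))
        = (n:ℝ) * ((15 / (n:ℝ)) * (bet n * k - bet n * ((n:ℝ) * d + k))) + ((15 / (n:ℝ)) * (bet n * (n:ℝ))) * k := by
      rw [← haffine]
      exact Finset.sum_congr rfl fun j _ => by ring
    rw [h1, h2, h3, hd0]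
    field_simp
    ring
  · have hd1 : d = 1 := by rw [hd]; unfold dd; rw [if_neg hc]
    have hconv : ∀ i : Fin n, (if i ∈ Ds n ω then (0:ℝ) else 1)
        = 1 - (if i ∈ Ds n ω then (1:ℝ) else 0) := fun i => by split <;> norm_num
    have hAf_cl : ∀ i : Fin n, Af n (upd n ω (some i) (ω.1 none, ω.2 none))
        = bet n * ((n:ℝ) * d + (k + (1 - (if i ∈ Ds n ω then (1:ℝ) else 0)))) := by
      intro i
      unfold Af
      rw [dd_upd_leaf, Ds_upd_leaf, if_neg hc, card_insert_real, ← hd, ← hk, hconv]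
    simp only [hAf_none, hAf_leaf, hAf_cl, hAf_cc, hAω]
    have h1 : (∑ i : Fin n, ((1/2 : ℝ) * (bet n * ((n:ℝ) * d + (k - (if i ∈ Ds n ω then (1:ℝ) else 0))) - bet n * ((n:ℝ) * d + k))
          + (1/2 : ℝ) * (bet n * ((n:ℝ) * d + (k - (if i ∈ Ds n ω then (1:ℝ) else 0))) - bet n * ((n:ℝ) * d + k))))
        = (n:ℝ) * 0 + (-(bet n)) * k := by
      rw [← haffine]
      exact Finset.sum_congr rfl fun i _ => by ring
    have h2 : (∑ i : Fin n, (15:ℝ) * (bet n * ((n:ℝ) * d + (k + (1 - (if i ∈ Ds n ω then (1:ℝ) else 0)))) - bet n * ((n:ℝ) * d + k)))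
        = (n:ℝ) * (15 * bet n) + (-(15 * bet n)) * k := by
      rw [← haffine]
      exact Finset.sum_congr rfl fun i _ => by ring
    have h3 : (∑ j : Fin n, (15 / (n:ℝ)) * (bet n * ((n:ℝ) * (if j ∈ Ds n ω then (1:ℝ) else 0) + k) - bet n * ((n:ℝ) * d + k)))
        = (n:ℝ) * ((15 / (n:ℝ)) * (bet n * k - bet n * ((n:ℝ) * d + k))) + ((15 / (n:ℝ)) * (bet n * (n:ℝ))) * k := by
      rw [← haffine]
      exact Finset.sum_congr rfl fun j _ => by ring
    rw [h1, h2, h3, hd1]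
    field_simp
    ring

/-- Bernoulli-type inequality for the fourth root. -/
lemma bern {x : ℝ} (hx : 1 ≤ x) :
    x ^ ((4:ℝ)⁻¹) ≤ 4 * x * (x ^ ((4:ℝ)⁻¹) - (x - 1) ^ ((4:ℝ)⁻¹)) := by
  have hx0 : (0:ℝ) ≤ x := by linarith
  have hx1 : (0:ℝ) ≤ x - 1 := by linarith
  set u := x ^ ((4:ℝ)⁻¹) with hu
  set w := (x - 1) ^ ((4:ℝ)⁻¹) with hw
  have hu0 : 0 ≤ u := Real.rpow_nonneg hx0 _
  have hw0 : 0 ≤ w := Real.rpow_nonneg hx1 _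
  have hu4 : u ^ (4:ℕ) = x := by
    rw [hu, ← Real.rpow_natCast (x ^ ((4:ℝ)⁻¹)) 4, ← Real.rpow_mul hx0]
    norm_num
  have hw4 : w ^ (4:ℕ) = x - 1 := by
    rw [hw, ← Real.rpow_natCast ((x - 1) ^ ((4:ℝ)⁻¹)) 4, ← Real.rpow_mul hx1]
    norm_num
  have key : 4 * u^3 * w ≤ 3 * u^4 + w^4 := by
    nlinarith [mul_nonneg (sq_nonneg (u - w)) (add_nonneg (add_nonneg (by positivity : (0:ℝ) ≤ 3*u^2) (by positivity : (0:ℝ) ≤ 2*u*w)) (sq_nonneg w)), sq_nonneg (u-w), mul_nonneg hu0 hw0]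
  have h1 : 1 ≤ 4 * u^3 * (u - w) := by nlinarith [key, hu4, hw4]
  have h2 : u * 1 ≤ u * (4 * u^3 * (u - w)) := mul_le_mul_of_nonneg_left h1 hu0
  calc u = u * 1 := by ring
    _ ≤ u * (4 * u^3 * (u - w)) := h2
    _ = 4 * (u^(4:ℕ)) * (u - w) := by ring
    _ = 4 * x * (u - w) := by rw [hu4]

lemma quad {x : ℝ} (h0 : 0 ≤ x) (h1 : x ≤ 1) :
    1 + 15 * x ≤ 16 * (15 * x^2 + 2 - 2 * x) := by
  nlinarith [sq_nonneg (x - 47/480)]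

/-- `Bf` is a supersolution at rate `4` for the coupled generator. -/
lemma Qhat_mulVec_Bf (hn : 0 < n) (ω : Pr n) : (Qhat n *ᵥ Bf n) ω ≤ -(4 * Bf n ω) := by
  have hnR : (0:ℝ) < n := by exact_mod_cast hn
  rw [Qhat_mulVec_star]
  set k : ℝ := ((Ds n ω).card : ℝ) with hk
  have hk0 : 0 ≤ k := by rw [hk]; positivity
  have hkn : k ≤ (n:ℝ) := by
    rw [hk]
    exact_mod_cast (Finset.card_le_univ (Ds n ω)).trans_eq (by simp)
  have hsum_e : (∑ i : Fin n, (if i ∈ Ds n ω then (1:ℝ) else 0)) = k := sum_ind_card n _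
  have hM0 : 0 ≤ Mc n := by unfold Mc; positivity
  have hnt0 : (0:ℝ) ≤ (n:ℝ) ^ ((4:ℝ)⁻¹) := Real.rpow_nonneg hnR.le _
  have hktn : k ^ ((4:ℝ)⁻¹) ≤ (n:ℝ) ^ ((4:ℝ)⁻¹) := Real.rpow_le_rpow hk0 hkn (by norm_num)
  have hcenp : ∀ j : Fin n, ((upd n ω none (ω.1 (some j), ω.2 (some j))).1 none
      = (upd n ω none (ω.1 (some j), ω.2 (some j))).2 none) ↔ (ω.1 (some j) = ω.2 (some j)) :=
    fun j => cen_upd_none n ω _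
  by_cases hc : ω.1 none = ω.2 none
  · -- center agrees
    have hBω : Bf n ω = k ^ ((4:ℝ)⁻¹) := by unfold Bf; rw [if_pos hc, ← hk]
    have hB_none : ∀ b : Bool, Bf n (upd n ω none (b, b)) = k ^ ((4:ℝ)⁻¹) := by
      intro b
      unfold Bf
      rw [if_pos ((cen_upd_none n ω (b,b)).mpr rfl), Ds_upd_none, ← hk]
    have hB_leaf : ∀ (i : Fin n) (p : Bool × Bool), p.1 = p.2 →
        Bf n (upd n ω (some i) p)
          = (if i ∈ Ds n ω then (k - 1) ^ ((4:ℝ)⁻¹) else k ^ ((4:ℝ)⁻¹)) := by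
      intro i p hp
      unfold Bf
      rw [if_pos ((cen_upd_leaf n ω i p).mpr hc), Ds_upd_leaf, if_pos hp, card_erase_real, ← hk]
      by_cases hi : i ∈ Ds n ω
      · rw [if_pos hi, if_pos hi]
      · rw [if_neg hi, if_neg hi, sub_zero]
    have hB_cc : ∀ j : Fin n, Bf n (upd n ω none (ω.1 (some j), ω.2 (some j)))
        = (if j ∈ Ds n ω then -(Mc n * k / n) else k ^ ((4:ℝ)⁻¹)) := by
      intro j
      unfold Bf
      rw [if_congr (hcenp j) rfl rfl, Ds_upd_none, ← hk]
      by_cases hj : j ∈ Ds n ω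
      · have hne : ¬ (ω.1 (some j) = ω.2 (some j)) := by
          simpa [Ds] using hj
        rw [if_neg hne, if_pos hj]
      · have heq : ω.1 (some j) = ω.2 (some j) := by
          have := hj
          simp only [Ds, Finset.mem_filter, Finset.mem_univ, true_and, not_not] at this
          exact this
        rw [if_pos heq, if_neg hj]
    have hsplit : ∀ (a b : ℝ), (∑ i : Fin n, (if i ∈ Ds n ω then a else b))
        = k * a + ((n:ℝ) - k) * b := by
      intro a b
      have hterm : ∀ i : Fin n, (if i ∈ Ds n ω then a else b)
          = b + (a - b) * (if i ∈ Ds n ω then (1:ℝ) else 0) := by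
        intro i; split <;> ring
      rw [Finset.sum_congr rfl fun i _ => hterm i, Finset.sum_add_distrib, Finset.sum_const,
        ← Finset.mul_sum, hsum_e, Finset.card_univ, Fintype.card_fin, nsmul_eq_mul]
      ring
    have hS2 : (∑ i : Fin n, ((1/2 : ℝ) * (Bf n (upd n ω (some i) (false, false)) - Bf n ω)
          + (1/2 : ℝ) * (Bf n (upd n ω (some i) (true, true)) - Bf n ω)))
        = k * ((k-1) ^ ((4:ℝ)⁻¹) - k ^ ((4:ℝ)⁻¹)) := by
      have h := fun i : Fin n => hB_leaf i (false, false) rfl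
      have h' := fun i : Fin n => hB_leaf i (true, true) rfl
      calc (∑ i : Fin n, ((1/2 : ℝ) * (Bf n (upd n ω (some i) (false, false)) - Bf n ω)
          + (1/2 : ℝ) * (Bf n (upd n ω (some i) (true, true)) - Bf n ω)))
          = ∑ i : Fin n, (if i ∈ Ds n ω then ((k-1) ^ ((4:ℝ)⁻¹) - k ^ ((4:ℝ)⁻¹)) else 0) := by
            refine Finset.sum_congr rfl fun i _ => ?_
            rw [h i, h' i, hBω]
            split <;> ring
        _ = k * ((k-1) ^ ((4:ℝ)⁻¹) - k ^ ((4:ℝ)⁻¹)) := by rw [hsplit]; ring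
    have hS3 : (∑ i : Fin n, (15:ℝ) * (Bf n (upd n ω (some i) (ω.1 none, ω.2 none)) - Bf n ω))
        = 15 * (k * ((k-1) ^ ((4:ℝ)⁻¹) - k ^ ((4:ℝ)⁻¹))) := by
      calc (∑ i : Fin n, (15:ℝ) * (Bf n (upd n ω (some i) (ω.1 none, ω.2 none)) - Bf n ω))
          = ∑ i : Fin n, (if i ∈ Ds n ω then 15 * ((k-1) ^ ((4:ℝ)⁻¹) - k ^ ((4:ℝ)⁻¹)) else 0) := by
            refine Finset.sum_congr rfl fun i _ => ?_
            rw [hB_leaf i (ω.1 none, ω.2 none) hc, hBω]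
            split <;> ring
        _ = 15 * (k * ((k-1) ^ ((4:ℝ)⁻¹) - k ^ ((4:ℝ)⁻¹))) := by rw [hsplit]; ring
    have hS4 : (∑ j : Fin n, (15 / (n:ℝ)) * (Bf n (upd n ω none (ω.1 (some j), ω.2 (some j))) - Bf n ω))
        = k * ((15 / (n:ℝ)) * (-(Mc n * k / n) - k ^ ((4:ℝ)⁻¹))) := by
      calc (∑ j : Fin n, (15 / (n:ℝ)) * (Bf n (upd n ω none (ω.1 (some j), ω.2 (some j))) - Bf n ω))
          = ∑ j : Fin n, (if j ∈ Ds n ω then (15 / (n:ℝ)) * (-(Mc n * k / n) - k ^ ((4:ℝ)⁻¹)) else 0) := by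
            refine Finset.sum_congr rfl fun j _ => ?_
            rw [hB_cc j, hBω]
            split <;> ring
        _ = k * ((15 / (n:ℝ)) * (-(Mc n * k / n) - k ^ ((4:ℝ)⁻¹))) := by rw [hsplit]; ring
    rw [hS2, hS3, hS4, hB_none false, hB_none true, hBω]
    have hF4 : k * ((15 / (n:ℝ)) * (-(Mc n * k / n) - k ^ ((4:ℝ)⁻¹))) ≤ 0 := by
      apply mul_nonpos_of_nonneg_of_nonpos hk0
      apply mul_nonpos_of_nonneg_of_nonpos (by positivity)
      have h5 : (0:ℝ) ≤ Mc n * k / n := by positivity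
      have h6 : (0:ℝ) ≤ k ^ ((4:ℝ)⁻¹) := Real.rpow_nonneg hk0 _
      linarith
    have hmain : (1 + 15) * (k * ((k-1) ^ ((4:ℝ)⁻¹) - k ^ ((4:ℝ)⁻¹))) ≤ -(4 * k ^ ((4:ℝ)⁻¹)) := by
      rcases eq_or_lt_of_le hk0 with h | h
      · rw [← h]
        simp [Real.zero_rpow (by norm_num : ((4:ℝ)⁻¹) ≠ 0)]
      · have hk1 : (1:ℝ) ≤ k := by
          rw [hk] at h ⊢
          exact_mod_cast Nat.one_le_iff_ne_zero.mpr (by exact_mod_cast h.ne')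
        have hb := bern hk1
        nlinarith [hb]
    linarith [hmain, hF4]
  · -- center disagrees
    have hBω : Bf n ω = -(Mc n * k / n) := by unfold Bf; rw [if_neg hc, ← hk]
    have hB_none : ∀ b : Bool, Bf n (upd n ω none (b, b)) = k ^ ((4:ℝ)⁻¹) := by
      intro b
      unfold Bf
      rw [if_pos ((cen_upd_none n ω (b,b)).mpr rfl), Ds_upd_none, ← hk]
    have hB_leaf : ∀ (i : Fin n) (b : Bool), Bf n (upd n ω (some i) (b, b))
        = -(Mc n * (k - (if i ∈ Ds n ω then (1:ℝ) else 0)) / n) := by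
      intro i b
      unfold Bf
      rw [if_neg (fun h => hc ((cen_upd_leaf n ω i (b,b)).mp h)), Ds_upd_leaf, if_pos rfl,
        card_erase_real, ← hk]
    have hB_cl : ∀ i : Fin n, Bf n (upd n ω (some i) (ω.1 none, ω.2 none))
        = -(Mc n * (k + (if i ∈ Ds n ω then (0:ℝ) else 1)) / n) := by
      intro i
      unfold Bf
      rw [if_neg (fun h => hc ((cen_upd_leaf n ω i _).mp h)), Ds_upd_leaf, if_neg hc,
        card_insert_real, ← hk]
    have hB_cc : ∀ j : Fin n, Bf n (upd n ω none (ω.1 (some j), ω.2 (some j)))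
        = (if j ∈ Ds n ω then -(Mc n * k / n) else k ^ ((4:ℝ)⁻¹)) := by
      intro j
      unfold Bf
      rw [if_congr (hcenp j) rfl rfl, Ds_upd_none, ← hk]
      by_cases hj : j ∈ Ds n ω
      · have hne : ¬ (ω.1 (some j) = ω.2 (some j)) := by
          simpa [Ds] using hj
        rw [if_neg hne, if_pos hj]
      · have heq : ω.1 (some j) = ω.2 (some j) := by
          have := hj
          simp only [Ds, Finset.mem_filter, Finset.mem_univ, true_and, not_not] at this
          exact this
        rw [if_pos heq, if_neg hj]
    have hsplit : ∀ (a b : ℝ), (∑ i : Fin n, (if i ∈ Ds n ω then a else b))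
        = k * a + ((n:ℝ) - k) * b := by
      intro a b
      have hterm : ∀ i : Fin n, (if i ∈ Ds n ω then a else b)
          = b + (a - b) * (if i ∈ Ds n ω then (1:ℝ) else 0) := by
        intro i; split <;> ring
      rw [Finset.sum_congr rfl fun i _ => hterm i, Finset.sum_add_distrib, Finset.sum_const,
        ← Finset.mul_sum, hsum_e, Finset.card_univ, Fintype.card_fin, nsmul_eq_mul]
      ring
    have hS2 : (∑ i : Fin n, ((1/2 : ℝ) * (Bf n (upd n ω (some i) (false, false)) - Bf n ω)
          + (1/2 : ℝ) * (Bf n (upd n ω (some i) (true, true)) - Bf n ω)))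
        = k * (Mc n / n) := by
      calc (∑ i : Fin n, ((1/2 : ℝ) * (Bf n (upd n ω (some i) (false, false)) - Bf n ω)
          + (1/2 : ℝ) * (Bf n (upd n ω (some i) (true, true)) - Bf n ω)))
          = ∑ i : Fin n, (if i ∈ Ds n ω then Mc n / n else 0) := by
            refine Finset.sum_congr rfl fun i _ => ?_
            rw [hB_leaf i false, hB_leaf i true, hBω]
            split
            · rw [mul_comm]; ring
            · ring
        _ = k * (Mc n / n) := by rw [hsplit]; ring
    have hS3 : (∑ i : Fin n, (15:ℝ) * (Bf n (upd n ω (some i) (ω.1 none, ω.2 none)) - Bf n ω))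
        = ((n:ℝ) - k) * (-(15 * Mc n / n)) := by
      calc (∑ i : Fin n, (15:ℝ) * (Bf n (upd n ω (some i) (ω.1 none, ω.2 none)) - Bf n ω))
          = ∑ i : Fin n, (if i ∈ Ds n ω then 0 else -(15 * Mc n / n)) := by
            refine Finset.sum_congr rfl fun i _ => ?_
            rw [hB_cl i, hBω]
            split
            · ring
            · ring
        _ = ((n:ℝ) - k) * (-(15 * Mc n / n)) := by rw [hsplit]; ring
    have hS4 : (∑ j : Fin n, (15 / (n:ℝ)) * (Bf n (upd n ω none (ω.1 (some j), ω.2 (some j))) - Bf n ω))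
        = ((n:ℝ) - k) * ((15 / (n:ℝ)) * (k ^ ((4:ℝ)⁻¹) + Mc n * k / n)) := by
      calc (∑ j : Fin n, (15 / (n:ℝ)) * (Bf n (upd n ω none (ω.1 (some j), ω.2 (some j))) - Bf n ω))
          = ∑ j : Fin n, (if j ∈ Ds n ω then 0 else (15 / (n:ℝ)) * (k ^ ((4:ℝ)⁻¹) + Mc n * k / n)) := by
            refine Finset.sum_congr rfl fun j _ => ?_
            rw [hB_cc j, hBω]
            split
            · ring
            · ring
        _ = ((n:ℝ) - k) * ((15 / (n:ℝ)) * (k ^ ((4:ℝ)⁻¹) + Mc n * k / n)) := by rw [hsplit]; ring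
    rw [hS2, hS3, hS4, hB_none false, hB_none true, hBω]
    -- final numeric inequality
    set u : ℝ := k ^ ((4:ℝ)⁻¹) with hu
    set x : ℝ := ((n:ℝ) - k) / n with hx
    have hx0 : 0 ≤ x := by
      rw [hx]
      apply div_nonneg (by linarith) hnR.le
    have hx1 : x ≤ 1 := by
      rw [hx, div_le_one hnR]
      linarith
    have hq := quad hx0 hx1
    have hn0 : (n:ℝ) ≠ 0 := hnR.ne'
    have hgoal : (1/2 : ℝ) * (u - -(Mc n * k / n)) + (1/2) * (u - -(Mc n * k / n))
          + k * (Mc n / n) + ((n:ℝ) - k) * (-(15 * Mc n / n))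
          + ((n:ℝ) - k) * ((15 / (n:ℝ)) * (u + Mc n * k / n))
        = u * (1 + 15 * x) - Mc n * (15 * x^2 + 2 - 2*x) + 4 * (Mc n * k / n) := by
      rw [hx]
      field_simp
      ring
    rw [hgoal]
    have h1 : u * (1 + 15 * x) ≤ (n:ℝ) ^ ((4:ℝ)⁻¹) * (1 + 15 * x) :=
      mul_le_mul_of_nonneg_right (hu ▸ hktn) (by linarith)
    have h2 : (n:ℝ) ^ ((4:ℝ)⁻¹) * (1 + 15 * x) ≤ (n:ℝ) ^ ((4:ℝ)⁻¹) * (16 * (15 * x^2 + 2 - 2*x)) :=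
      mul_le_mul_of_nonneg_left hq hnt0
    have hMc : Mc n * (15 * x^2 + 2 - 2*x) = (n:ℝ) ^ ((4:ℝ)⁻¹) * (16 * (15 * x^2 + 2 - 2*x)) := by
      unfold Mc
      ring
    linarith [h1, h2]

lemma Af_nonneg (ω : Pr n) : 0 ≤ Af n ω := by
  unfold Af bet dd Mc
  have h1 : (0:ℝ) ≤ (n:ℝ) ^ ((4:ℝ)⁻¹) := Real.rpow_nonneg (Nat.cast_nonneg n) _
  positivity

lemma floor_le (hn : 0 < n) (ω : Pr n) (hω : ω.1 ≠ ω.2) : 1 ≤ Af n ω + Bf n ω := by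
  have hnR : (0:ℝ) < n := by exact_mod_cast hn
  by_cases hc : ω.1 none = ω.2 none
  · -- some leaf disagrees
    have hex : ∃ i : Fin n, ω.1 (some i) ≠ ω.2 (some i) := by
      by_contra hcon
      push_neg at hcon
      apply hω
      funext x
      cases x with
      | none => exact hc
      | some i => exact hcon i
    obtain ⟨i, hi⟩ := hex
    have hk1 : 1 ≤ ((Ds n ω).card : ℝ) := by
      have : i ∈ Ds n ω := by simp [Ds, hi]
      exact_mod_cast Finset.one_le_card.mpr ⟨i, this⟩
    have hB : (1:ℝ) ≤ Bf n ω := by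
      unfold Bf
      rw [if_pos hc]
      exact Real.one_le_rpow hk1 (by norm_num)
    linarith [Af_nonneg n ω]
  · -- center disagrees
    have hkn : ((Ds n ω).card : ℝ) ≤ (n:ℝ) := by
      exact_mod_cast (Finset.card_le_univ (Ds n ω)).trans_eq (by simp)
    have hk0 : (0:ℝ) ≤ ((Ds n ω).card : ℝ) := by positivity
    have hM0 : (0:ℝ) ≤ Mc n := by
      unfold Mc
      have : (0:ℝ) ≤ (n:ℝ) ^ ((4:ℝ)⁻¹) := Real.rpow_nonneg (Nat.cast_nonneg n) _
      positivity
    have hA : Af n ω = ((1 + Mc n) / n) * ((n:ℝ) * 1 + ((Ds n ω).card : ℝ)) := by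
      unfold Af bet dd
      rw [if_neg hc]
    have hB : Bf n ω = -(Mc n * ((Ds n ω).card : ℝ) / n) := by
      unfold Bf
      rw [if_neg hc]
    rw [hA, hB]
    have hstep : (1 + Mc n) / (n:ℝ) * ((n:ℝ) * 1 + ((Ds n ω).card : ℝ))
          + -(Mc n * ((Ds n ω).card : ℝ) / n)
        = ((n:ℝ) + ((Ds n ω).card : ℝ) + Mc n * (n:ℝ)) / n := by
      field_simp
      ring
    rw [hstep, le_div_iff₀ hnR]
    nlinarith [hk0, hM0, hnR]

lemma Af_le (ω : Pr n) : Af n ω ≤ 2 * (1 + Mc n) := by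
  have hkn : ((Ds n ω).card : ℝ) ≤ (n:ℝ) := by
    exact_mod_cast (Finset.card_le_univ (Ds n ω)).trans_eq (by simp)
  have hd1 : dd n ω ≤ 1 := by unfold dd; split <;> norm_num
  have hd0 : 0 ≤ dd n ω := by unfold dd; split <;> norm_num
  have hM0 : (0:ℝ) ≤ Mc n := by
    unfold Mc
    have : (0:ℝ) ≤ (n:ℝ) ^ ((4:ℝ)⁻¹) := Real.rpow_nonneg (Nat.cast_nonneg n) _
    positivity
  rcases Nat.eq_zero_or_pos n with h0 | hpos
  · subst h0
    unfold Af bet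
    simp
    positivity
  · have hnR : (0:ℝ) < n := by exact_mod_cast hpos
    unfold Af bet
    rw [div_mul_eq_mul_div, div_le_iff₀ hnR]
    nlinarith [hkn, hd1, hd0, hM0, hnR, mul_le_mul_of_nonneg_left hd1 (le_of_lt (by positivity : (0:ℝ) < (1 + Mc n) * n)), mul_le_mul_of_nonneg_left hkn (by positivity : (0:ℝ) ≤ 1 + Mc n)]

lemma Bf_le (ω : Pr n) : Bf n ω ≤ (n:ℝ) ^ ((4:ℝ)⁻¹) := by
  have hnt0 : (0:ℝ) ≤ (n:ℝ) ^ ((4:ℝ)⁻¹) := Real.rpow_nonneg (Nat.cast_nonneg n) _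
  unfold Bf
  split
  · apply Real.rpow_le_rpow (by positivity) ?_ (by norm_num)
    exact_mod_cast (Finset.card_le_univ (Ds n ω)).trans_eq (by simp)
  · have hM0 : (0:ℝ) ≤ Mc n := by unfold Mc; positivity
    have : (0:ℝ) ≤ Mc n * ((Ds n ω).card : ℝ) / n := by positivity
    linarith

noncomputable def offInd : Pr n → ℝ := fun ω => if ω.1 = ω.2 then 0 else 1

lemma offInd_le (hn : 0 < n) : ∀ ω : Pr n, offInd n ω ≤ Af n ω + Bf n ω := by
  intro ω
  unfold offInd
  split
  · next h =>
    have hc : ω.1 none = ω.2 none := by rw [h]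
    have hB : 0 ≤ Bf n ω := by
      unfold Bf
      rw [if_pos hc]
      exact Real.rpow_nonneg (by positivity) _
    linarith [Af_nonneg n ω]
  · next h => exact floor_le n hn ω h

lemma inner_tv_sum (ω' : Pr n) :
    (∑ ξ : Cfg n, |(if ω'.1 = ξ then (1:ℝ) else 0) - (if ω'.2 = ξ then 1 else 0)|)
      = 2 * offInd n ω' := by
  unfold offInd
  by_cases h : ω'.1 = ω'.2
  · rw [if_pos h]
    rw [Finset.sum_eq_zero]
    · ring
    · intro ξ _
      rw [h]
      simp
  · rw [if_neg h]
    have hterm : ∀ ξ : Cfg n, |(if ω'.1 = ξ then (1:ℝ) else 0) - (if ω'.2 = ξ then 1 else 0)|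
        = (if ω'.1 = ξ then (1:ℝ) else 0) + (if ω'.2 = ξ then 1 else 0) := by
      intro ξ
      by_cases h1 : ω'.1 = ξ
      · have h2 : ¬ (ω'.2 = ξ) := fun hh => h (h1.trans hh.symm)
        rw [if_pos h1, if_neg h2]
        norm_num
      · by_cases h2 : ω'.2 = ξ
        · rw [if_neg h1, if_pos h2]
          norm_num
        · rw [if_neg h1, if_neg h2]
          norm_num
    rw [Finset.sum_congr rfl fun ξ _ => hterm ξ, Finset.sum_add_distrib]
    rw [Finset.sum_ite_eq Finset.univ ω'.1 (fun _ => (1:ℝ)),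
      Finset.sum_ite_eq Finset.univ ω'.2 (fun _ => (1:ℝ))]
    simp
    norm_num

/-- coupling bound for total variation between two rows of the semigroup. -/
lemma pair_tv (hn : 0 < n) {t : ℝ} (ht : 0 ≤ t) (η ζ : Cfg n) :
    tvDist (voterP (qq n) t η) (voterP (qq n) t ζ)
      ≤ Real.exp (-(1*t)) * (2 * (1 + Mc n)) + Real.exp (-(4*t)) * ((n:ℝ) ^ ((4:ℝ)⁻¹)) := by
  set Phat := NormedSpace.exp (t • Qhat n) with hPhat
  have hpos : ∀ p q : Pr n, 0 ≤ Phat p q := fun p q =>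
    NVMaux.exp_gen_nonneg (Qhat_offdiag_nonneg n) ht p q
  have hint1 : Phat * E1 n = E1 n * voterP (qq n) t := by
    unfold voterP
    apply NVMaux.exp_intertwine
    rw [Matrix.smul_mul, Matrix.mul_smul, Qhat_mul_E1]
  have hint2 : Phat * E2 n = E2 n * voterP (qq n) t := by
    unfold voterP
    apply NVMaux.exp_intertwine
    rw [Matrix.smul_mul, Matrix.mul_smul, Qhat_mul_E2]
  have hrow1 : ∀ ξ, voterP (qq n) t η ξ = ∑ ω' : Pr n, Phat (η, ζ) ω' * E1 n ω' ξ := by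
    intro ξ
    have h := congrFun (congrFun hint1 (η, ζ)) ξ
    rw [Matrix.mul_apply, Matrix.mul_apply] at h
    have hcollapse : (∑ j : Cfg n, E1 n (η, ζ) j * voterP (qq n) t j ξ)
        = voterP (qq n) t η ξ := by
      rw [Finset.sum_eq_single η]
      · simp [E1]
      · intro b _ hb
        rw [show E1 n (η, ζ) b = 0 from if_neg (fun h => hb h.symm), zero_mul]
      · intro hmem; exact absurd (Finset.mem_univ η) hmem
    rw [← hcollapse]
    exact h.symm
  have hrow2 : ∀ ξ, voterP (qq n) t ζ ξ = ∑ ω' : Pr n, Phat (η, ζ) ω' * E2 n ω' ξ := by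
    intro ξ
    have h := congrFun (congrFun hint2 (η, ζ)) ξ
    rw [Matrix.mul_apply, Matrix.mul_apply] at h
    have hcollapse : (∑ j : Cfg n, E2 n (η, ζ) j * voterP (qq n) t j ξ)
        = voterP (qq n) t ζ ξ := by
      rw [Finset.sum_eq_single ζ]
      · simp [E2]
      · intro b _ hb
        rw [show E2 n (η, ζ) b = 0 from if_neg (fun h => hb h.symm), zero_mul]
      · intro hmem; exact absurd (Finset.mem_univ ζ) hmem
    rw [← hcollapse]
    exact h.symm
  have step1 : tvDist (voterP (qq n) t η) (voterP (qq n) t ζ)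
      ≤ (Phat *ᵥ offInd n) (η, ζ) := by
    unfold tvDist
    have habs : ∀ ξ : Cfg n, |voterP (qq n) t η ξ - voterP (qq n) t ζ ξ|
        ≤ ∑ ω' : Pr n, Phat (η, ζ) ω'
            * |(if ω'.1 = ξ then (1:ℝ) else 0) - (if ω'.2 = ξ then 1 else 0)| := by
      intro ξ
      rw [hrow1 ξ, hrow2 ξ, ← Finset.sum_sub_distrib]
      refine (Finset.abs_sum_le_sum_abs _ _).trans ?_
      apply Finset.sum_le_sum
      intro ω' _
      rw [show Phat (η, ζ) ω' * E1 n ω' ξ - Phat (η, ζ) ω' * E2 n ω' ξ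
          = Phat (η, ζ) ω' * (E1 n ω' ξ - E2 n ω' ξ) by ring]
      rw [abs_mul, abs_of_nonneg (hpos _ _)]
      exact le_of_eq rfl
    have hsum : (∑ ξ : Cfg n, |voterP (qq n) t η ξ - voterP (qq n) t ζ ξ|)
        ≤ ∑ ω' : Pr n, Phat (η, ζ) ω' * (2 * offInd n ω') := by
      calc (∑ ξ : Cfg n, |voterP (qq n) t η ξ - voterP (qq n) t ζ ξ|)
          ≤ ∑ ξ : Cfg n, ∑ ω' : Pr n, Phat (η, ζ) ω'
              * |(if ω'.1 = ξ then (1:ℝ) else 0) - (if ω'.2 = ξ then 1 else 0)| :=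
            Finset.sum_le_sum fun ξ _ => habs ξ
        _ = ∑ ω' : Pr n, ∑ ξ : Cfg n, Phat (η, ζ) ω'
              * |(if ω'.1 = ξ then (1:ℝ) else 0) - (if ω'.2 = ξ then 1 else 0)| :=
            Finset.sum_comm
        _ = ∑ ω' : Pr n, Phat (η, ζ) ω' * (2 * offInd n ω') := by
            refine Finset.sum_congr rfl fun ω' _ => ?_
            rw [← Finset.mul_sum, inner_tv_sum]
    have : (Phat *ᵥ offInd n) (η, ζ) = ∑ ω' : Pr n, Phat (η, ζ) ω' * offInd n ω' := rfl
    rw [this]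
    calc (1/2 : ℝ) * ∑ ξ : Cfg n, |voterP (qq n) t η ξ - voterP (qq n) t ζ ξ|
        ≤ (1/2 : ℝ) * ∑ ω' : Pr n, Phat (η, ζ) ω' * (2 * offInd n ω') := by linarith [hsum]
      _ = ∑ ω' : Pr n, Phat (η, ζ) ω' * offInd n ω' := by
          rw [Finset.mul_sum]
          exact Finset.sum_congr rfl fun ω' _ => by ring
  have step2 : (Phat *ᵥ offInd n) (η, ζ) ≤ (Phat *ᵥ (fun ω => Af n ω + Bf n ω)) (η, ζ) :=
    NVMaux.mulVec_mono hpos (offInd_le n hn) _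
  have step3 : (Phat *ᵥ (fun ω => Af n ω + Bf n ω)) (η, ζ)
      = (Phat *ᵥ Af n) (η, ζ) + (Phat *ᵥ Bf n) (η, ζ) := by
    rw [show (fun ω => Af n ω + Bf n ω) = (Af n) + (Bf n) from rfl, Matrix.mulVec_add]
    rfl
  have step4 : (Phat *ᵥ Af n) (η, ζ) ≤ Real.exp (-(1*t)) * Af n (η, ζ) := by
    apply NVMaux.exp_gronwall (Qhat_offdiag_nonneg n) ?_ ht
    intro ω
    rw [Qhat_mulVec_Af n hn ω]
    rw [one_mul]
  have step5 : (Phat *ᵥ Bf n) (η, ζ) ≤ Real.exp (-(4*t)) * Bf n (η, ζ) := by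
    apply NVMaux.exp_gronwall (Qhat_offdiag_nonneg n) ?_ ht
    intro ω
    exact Qhat_mulVec_Bf n hn ω
  have step6 : Real.exp (-(1*t)) * Af n (η, ζ) ≤ Real.exp (-(1*t)) * (2 * (1 + Mc n)) :=
    mul_le_mul_of_nonneg_left (Af_le n _) (Real.exp_nonneg _)
  have step7 : Real.exp (-(4*t)) * Bf n (η, ζ) ≤ Real.exp (-(4*t)) * ((n:ℝ) ^ ((4:ℝ)⁻¹)) :=
    mul_le_mul_of_nonneg_left (Bf_le n _) (Real.exp_nonneg _)
  linarith [step1, step2, step3.le, step3.ge, step4, step5, step6, step7]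

lemma stationary_tv (hn : 0 < n) {t : ℝ} (ht : 0 ≤ t) (μinf : Cfg n → ℝ)
    (hμ : IsStationaryNVM (qq n) μinf) (η : Cfg n) :
    tvDist (voterP (qq n) t η) μinf
      ≤ Real.exp (-(1*t)) * (2 * (1 + Mc n)) + Real.exp (-(4*t)) * ((n:ℝ) ^ ((4:ℝ)⁻¹)) := by
  obtain ⟨hpos, hsum, hstat⟩ := hμ
  have hvm0 : μinf ᵥ* voterGen (qq n) = 0 := by
    funext ξ
    exact hstat ξ
  have hvm : μinf ᵥ* (t • voterGen (qq n)) = 0 := by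
    funext ξ
    have h1 : (μinf ᵥ* (t • voterGen (qq n))) ξ
        = NVMaux.vmL μinf ξ (t • voterGen (qq n)) := rfl
    rw [h1, LinearMap.map_smul]
    have h2 : NVMaux.vmL μinf ξ (voterGen (qq n)) = (μinf ᵥ* voterGen (qq n)) ξ := rfl
    rw [smul_eq_mul, h2, hvm0]
    simp
  have hinv : μinf ᵥ* (voterP (qq n) t) = μinf := by
    unfold voterP
    exact NVMaux.vecMul_exp_of_vecMul_eq_zero hvm
  have hmu : ∀ ξ, μinf ξ = ∑ ζ : Cfg n, μinf ζ * voterP (qq n) t ζ ξ := by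
    intro ξ
    conv_lhs => rw [← hinv]
    rfl
  set B : ℝ := Real.exp (-(1*t)) * (2 * (1 + Mc n))
      + Real.exp (-(4*t)) * ((n:ℝ) ^ ((4:ℝ)⁻¹)) with hB
  have hper : ∀ ξ, |voterP (qq n) t η ξ - μinf ξ|
      ≤ ∑ ζ : Cfg n, μinf ζ * |voterP (qq n) t η ξ - voterP (qq n) t ζ ξ| := by
    intro ξ
    have h1 : voterP (qq n) t η ξ - μinf ξ
        = ∑ ζ : Cfg n, μinf ζ * (voterP (qq n) t η ξ - voterP (qq n) t ζ ξ) := by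
      rw [hmu ξ]
      have h2 : voterP (qq n) t η ξ = ∑ ζ : Cfg n, μinf ζ * voterP (qq n) t η ξ := by
        rw [← Finset.sum_mul, hsum, one_mul]
      calc voterP (qq n) t η ξ - ∑ ζ : Cfg n, μinf ζ * voterP (qq n) t ζ ξ
          = (∑ ζ : Cfg n, μinf ζ * voterP (qq n) t η ξ)
            - ∑ ζ : Cfg n, μinf ζ * voterP (qq n) t ζ ξ := by rw [← h2]
        _ = ∑ ζ : Cfg n, (μinf ζ * voterP (qq n) t η ξ - μinf ζ * voterP (qq n) t ζ ξ) := by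
            rw [Finset.sum_sub_distrib]
        _ = ∑ ζ : Cfg n, μinf ζ * (voterP (qq n) t η ξ - voterP (qq n) t ζ ξ) := by
            exact Finset.sum_congr rfl fun ζ _ => by ring
    rw [h1]
    refine (Finset.abs_sum_le_sum_abs _ _).trans ?_
    apply Finset.sum_le_sum
    intro ζ _
    rw [abs_mul, abs_of_nonneg (hpos ζ)]
  unfold tvDist
  have hswap : (∑ ξ : Cfg n, |voterP (qq n) t η ξ - μinf ξ|)
      ≤ ∑ ζ : Cfg n, μinf ζ * ∑ ξ : Cfg n, |voterP (qq n) t η ξ - voterP (qq n) t ζ ξ| := by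
    calc (∑ ξ : Cfg n, |voterP (qq n) t η ξ - μinf ξ|)
        ≤ ∑ ξ : Cfg n, ∑ ζ : Cfg n, μinf ζ * |voterP (qq n) t η ξ - voterP (qq n) t ζ ξ| :=
          Finset.sum_le_sum fun ξ _ => hper ξ
      _ = ∑ ζ : Cfg n, ∑ ξ : Cfg n, μinf ζ * |voterP (qq n) t η ξ - voterP (qq n) t ζ ξ| :=
          Finset.sum_comm
      _ = ∑ ζ : Cfg n, μinf ζ * ∑ ξ : Cfg n, |voterP (qq n) t η ξ - voterP (qq n) t ζ ξ| := by
          exact Finset.sum_congr rfl fun ζ _ => (Finset.mul_sum _ _ _).symm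
  have htv : ∀ ζ : Cfg n, (1/2 : ℝ) * ∑ ξ : Cfg n, |voterP (qq n) t η ξ - voterP (qq n) t ζ ξ| ≤ B :=
    fun ζ => pair_tv n hn ht η ζ
  calc (1/2 : ℝ) * ∑ ξ : Cfg n, |voterP (qq n) t η ξ - μinf ξ|
      ≤ (1/2 : ℝ) * ∑ ζ : Cfg n, μinf ζ
          * ∑ ξ : Cfg n, |voterP (qq n) t η ξ - voterP (qq n) t ζ ξ| := by linarith [hswap]
    _ = ∑ ζ : Cfg n, μinf ζ
          * ((1/2 : ℝ) * ∑ ξ : Cfg n, |voterP (qq n) t η ξ - voterP (qq n) t ζ ξ|) := by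
        rw [Finset.mul_sum]
        exact Finset.sum_congr rfl fun ζ _ => by ring
    _ ≤ ∑ ζ : Cfg n, μinf ζ * B :=
        Finset.sum_le_sum fun ζ _ => mul_le_mul_of_nonneg_left (htv ζ) (hpos ζ)
    _ = B := by rw [← Finset.sum_mul, hsum, one_mul]

lemma numeric (n : ℕ) (hN : 140^12 ≤ n) :
    Real.exp (-(1*(Real.log n / 3))) * (2 * (1 + Mc n))
      + Real.exp (-(4*(Real.log n / 3))) * ((n:ℝ) ^ ((4:ℝ)⁻¹)) ≤ 1/4 := by
  have hn1 : (1:ℝ) ≤ (n:ℝ) := by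
    have : (1:ℕ) ≤ n := le_trans (by norm_num) hN
    exact_mod_cast this
  have hnR : (0:ℝ) < n := by linarith
  have he1 : Real.exp (-(1*(Real.log n / 3))) = (n:ℝ) ^ (-(3⁻¹ : ℝ)) := by
    rw [Real.rpow_def_of_pos hnR]
    congr 1
    ring
  have he4 : Real.exp (-(4*(Real.log n / 3))) = (n:ℝ) ^ (-(4/3 : ℝ)) := by
    rw [Real.rpow_def_of_pos hnR]
    congr 1
    ring
  rw [he1, he4]
  have hMc : Mc n = 16 * (n:ℝ) ^ ((4:ℝ)⁻¹) := rfl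
  rw [hMc]
  have hm1 : (n:ℝ) ^ ((4:ℝ)⁻¹) * (n:ℝ) ^ (-(3⁻¹:ℝ)) = (n:ℝ) ^ (-((12:ℝ)⁻¹)) := by
    rw [← Real.rpow_add hnR]
    norm_num
  have hm2 : (n:ℝ) ^ (-(4/3:ℝ)) * (n:ℝ) ^ ((4:ℝ)⁻¹) = (n:ℝ) ^ (-(13/12:ℝ)) := by
    rw [← Real.rpow_add hnR]
    norm_num
  have hsplit : (n:ℝ) ^ (-(3⁻¹:ℝ)) * (2 * (1 + 16 * (n:ℝ) ^ ((4:ℝ)⁻¹)))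
        + (n:ℝ) ^ (-(4/3:ℝ)) * ((n:ℝ) ^ ((4:ℝ)⁻¹))
      = 2 * (n:ℝ) ^ (-(3⁻¹:ℝ)) + 32 * ((n:ℝ) ^ ((4:ℝ)⁻¹) * (n:ℝ) ^ (-(3⁻¹:ℝ)))
        + (n:ℝ) ^ (-(4/3:ℝ)) * ((n:ℝ) ^ ((4:ℝ)⁻¹)) := by ring
  rw [hsplit, hm1, hm2]
  have hA : (n:ℝ) ^ (-(3⁻¹:ℝ)) ≤ (n:ℝ) ^ (-((12:ℝ)⁻¹)) :=
    Real.rpow_le_rpow_of_exponent_le hn1 (by norm_num)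
  have hB : (n:ℝ) ^ (-(13/12:ℝ)) ≤ (n:ℝ) ^ (-((12:ℝ)⁻¹)) :=
    Real.rpow_le_rpow_of_exponent_le hn1 (by norm_num)
  have h140 : (140:ℝ) ≤ (n:ℝ) ^ ((12:ℝ)⁻¹) := by
    have hcast : ((140:ℝ))^(12:ℕ) ≤ (n:ℝ) := by
      have h : ((140^12 : ℕ) : ℝ) ≤ (n:ℝ) := by exact_mod_cast hN
      have h2 : ((140^12 : ℕ) : ℝ) = ((140:ℝ))^(12:ℕ) := by norm_num
      linarith [h2 ▸ h]
    calc (140:ℝ) = (((140:ℝ))^(12:ℕ)) ^ ((12:ℝ)⁻¹) := by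
          rw [← Real.rpow_natCast (140:ℝ) 12, ← Real.rpow_mul (by norm_num)]
          norm_num
      _ ≤ (n:ℝ) ^ ((12:ℝ)⁻¹) := Real.rpow_le_rpow (by positivity) hcast (by norm_num)
  have hinv : (n:ℝ) ^ (-((12:ℝ)⁻¹)) ≤ 1/140 := by
    rw [Real.rpow_neg hnR.le]
    rw [inv_le_iff_one_le_mul₀ (by positivity)]
    calc (1:ℝ) = (1/140) * 140 := by norm_num
      _ ≤ (1/140) * ((n:ℝ) ^ ((12:ℝ)⁻¹)) := by
          apply mul_le_mul_of_nonneg_left h140 (by norm_num)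
      _ = (1/140) * ((n:ℝ) ^ ((12:ℝ)⁻¹)) := rfl
  have hp0 : (0:ℝ) ≤ (n:ℝ) ^ (-((12:ℝ)⁻¹)) := Real.rpow_nonneg hnR.le _
  calc 2 * (n:ℝ) ^ (-(3⁻¹:ℝ)) + 32 * ((n:ℝ) ^ (-((12:ℝ)⁻¹))) + (n:ℝ) ^ (-(13/12:ℝ))
      ≤ 2 * (n:ℝ) ^ (-((12:ℝ)⁻¹)) + 32 * ((n:ℝ) ^ (-((12:ℝ)⁻¹)))
        + (n:ℝ) ^ (-((12:ℝ)⁻¹)) := by linarith [hA, hB]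
    _ = 35 * ((n:ℝ) ^ (-((12:ℝ)⁻¹))) := by ring
    _ ≤ 35 * (1/140) := by linarith [hinv]
    _ = 1/4 := by norm_num

end NVMstar

/-- **The `n`-star counterexample of Cox–Peres–Steif.** There is a constant `c > 0` such that
for all large `n`, the noisy voter model on the `n`-star with voting rates sped up by `c`
(i.e. `q(leaf, center) = c`, `q(center, leaf) = c/n`) has mixing time at most `(log n)/3`,
which is strictly smaller than `(1/2) log n`; the cutoff lower bound of the main theorem can
thus fail when the stationary distributions of the voting chains are far from uniform. -/
theorem stmt_16 :
    ∃ c : ℝ, 0 < c ∧ ∃ N : ℕ, ∀ n : ℕ, N ≤ n →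
      ∀ μinf : (Option (Fin n) → Bool) → ℝ,
        IsStationaryNVM (fun x y => c * starQ n x y) μinf →
          (⨆ η : Option (Fin n) → Bool,
            tvDist (voterP (fun x y => c * starQ n x y) (Real.log n / 3) η) μinf) ≤ 1 / 4 := by
  refine ⟨15, by norm_num, 140^12, ?_⟩
  intro n hN μinf hμ
  have hn : 0 < n := lt_of_lt_of_le (pow_pos (by norm_num) 12) hN
  have hq : (fun x y => (15:ℝ) * starQ n x y) = NVMstar.qq n := rfl
  rw [hq] at hμ ⊢
  have ht : 0 ≤ Real.log n / 3 := by
    apply div_nonneg _ (by norm_num)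
    apply Real.log_nonneg
    exact_mod_cast Nat.one_le_iff_ne_zero.mpr hn.ne'
  apply ciSup_le
  intro η
  have h1 := NVMstar.stationary_tv n hn ht μinf hμ η
  have h2 := NVMstar.numeric n hN
  exact h1.trans h2
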